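/- Let V, W ∈ R^{d×k} have orthonormal columns, and let R ∈ R^{k×k} be any orthogonal matrix. Then ‖W − VR‖_F ≤ √2 · √k · dist(W,V) + ‖VVᵀW − VR‖_F, and in particular for the Procrustes-optimal R one has ‖W − VR‖_F ≤ √2 · √k · dist(W,V). -/

import Mathlib

open Matrix

/-- Operator (spectral) norm of a square real matrix. -/
noncomputable def opNorm {d : ℕ} (A : Matrix (Fin d) (Fin d) ℝ) : ℝ :=
  ‖(Matrix.toEuclideanCLM (𝕜 := ℝ) A :
      EuclideanSpace ℝ (Fin d) →L[ℝ] EuclideanSpace ℝ (Fin d))‖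

/-- Subspace distance `dist(W,V) = ‖VVᵀ − WWᵀ‖_op`. -/
noncomputable def distSub {d k : ℕ} (W V : Matrix (Fin d) (Fin k) ℝ) : ℝ :=
  opNorm (V * Vᵀ - W * Wᵀ)

/-- Frobenius norm of a rectangular real matrix. -/
noncomputable def frobNorm {m n : ℕ} (A : Matrix (Fin m) (Fin n) ℝ) : ℝ :=
  Real.sqrt (∑ i, ∑ j, (A i j) ^ 2)

open scoped RealInnerProductSpace

section Aux

/-- Squared Frobenius norm. -/
noncomputable def S2 {m n : ℕ} (A : Matrix (Fin m) (Fin n) ℝ) : ℝ :=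
  ∑ i, ∑ j, (A i j) ^ 2

lemma frobNorm_eq_sqrt_S2 {m n : ℕ} (A : Matrix (Fin m) (Fin n) ℝ) :
    frobNorm A = Real.sqrt (S2 A) := rfl

lemma S2_nonneg {m n : ℕ} (A : Matrix (Fin m) (Fin n) ℝ) : 0 ≤ S2 A := by
  apply Finset.sum_nonneg; intro i _; apply Finset.sum_nonneg; intro j _; positivity

lemma S2_eq_trace {m n : ℕ} (A : Matrix (Fin m) (Fin n) ℝ) :
    S2 A = (Aᵀ * A).trace := by
  simp only [S2, Matrix.trace, Matrix.diag, mul_apply, Matrix.transpose_apply, sq]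
  exact Finset.sum_comm

lemma trace_transpose_mul {m n : ℕ} (X Y : Matrix (Fin m) (Fin n) ℝ) :
    (Yᵀ * X).trace = (Xᵀ * Y).trace := by
  rw [← Matrix.trace_transpose (Yᵀ * X), Matrix.transpose_mul, Matrix.transpose_transpose]

lemma S2_sub {m n : ℕ} (X Y : Matrix (Fin m) (Fin n) ℝ) :
    S2 (X - Y) = (Xᵀ * X).trace - 2 * (Xᵀ * Y).trace + (Yᵀ * Y).trace := by
  rw [S2_eq_trace, Matrix.transpose_sub, Matrix.sub_mul, Matrix.mul_sub, Matrix.mul_sub,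
    Matrix.trace_sub, Matrix.trace_sub, Matrix.trace_sub, trace_transpose_mul Y X]
  ring

lemma mulVec_sq_le {d : ℕ} (A : Matrix (Fin d) (Fin d) ℝ) (x : Fin d → ℝ) :
    ∑ i, (A *ᵥ x) i ^ 2 ≤ opNorm A ^ 2 * ∑ i, x i ^ 2 := by
  have hop : 0 ≤ opNorm A := norm_nonneg _
  have h1 : ‖((WithLp.equiv 2 _).symm (A *ᵥ x) : EuclideanSpace ℝ (Fin d))‖ ≤
      opNorm A * ‖((WithLp.equiv 2 _).symm x : EuclideanSpace ℝ (Fin d))‖ := by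
    have h := ContinuousLinearMap.le_opNorm (Matrix.toEuclideanCLM (𝕜 := ℝ) A)
      ((WithLp.equiv 2 _).symm x)
    rwa [WithLp.equiv_symm_apply, Matrix.toEuclideanCLM_toLp, ← WithLp.equiv_symm_apply] at h
  have h2 : ‖((WithLp.equiv 2 _).symm (A *ᵥ x) : EuclideanSpace ℝ (Fin d))‖ ^ 2
      = ∑ i, (A *ᵥ x) i ^ 2 := by
    rw [EuclideanSpace.norm_eq, Real.sq_sqrt (by positivity)]
    simp [Real.norm_eq_abs, sq_abs]
  have h3 : ‖((WithLp.equiv 2 _).symm x : EuclideanSpace ℝ (Fin d))‖ ^ 2 = ∑ i, x i ^ 2 := by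
    rw [EuclideanSpace.norm_eq, Real.sq_sqrt (by positivity)]
    simp [Real.norm_eq_abs, sq_abs]
  nlinarith [h1, h2, h3, hop,
    norm_nonneg ((WithLp.equiv 2 _).symm (A *ᵥ x) : EuclideanSpace ℝ (Fin d)),
    norm_nonneg ((WithLp.equiv 2 _).symm x : EuclideanSpace ℝ (Fin d))]

lemma S2_mul_le {d k : ℕ} (A : Matrix (Fin d) (Fin d) ℝ) (B : Matrix (Fin d) (Fin k) ℝ) :
    S2 (A * B) ≤ opNorm A ^ 2 * S2 B := by
  have hAB : S2 (A * B) = ∑ j, ∑ i, (A * B) i j ^ 2 := by unfold S2; exact Finset.sum_comm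
  have hB : S2 B = ∑ j, ∑ i, B i j ^ 2 := by unfold S2; exact Finset.sum_comm
  rw [hAB, hB, Finset.mul_sum]
  apply Finset.sum_le_sum
  intro j _
  have h := mulVec_sq_le A (fun y => B y j)
  have e : (∑ i, (A * B) i j ^ 2) = ∑ i, (A *ᵥ fun y => B y j) i ^ 2 := rfl
  rw [e]
  exact h

lemma exists_rot {k : ℕ} (M : Matrix (Fin k) (Fin k) ℝ)
    (h1 : ((1 : Matrix (Fin k) (Fin k) ℝ) - Mᵀ * M).PosSemidef) :
    ∃ R : Matrix (Fin k) (Fin k) ℝ, Rᵀ * R = 1 ∧ (Mᵀ * M).trace ≤ (Rᵀ * M).trace := by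
  classical
  have hpsd : (Mᵀ * M).PosSemidef := by
    simpa [Matrix.conjTranspose_eq_transpose_of_trivial] using
      Matrix.posSemidef_conjTranspose_mul_self M
  have hH : (Mᵀ * M).IsHermitian := hpsd.1
  set lam := hH.eigenvalues with hlam
  set b := hH.eigenvectorBasis with hb
  have hmul : ∀ j, (Mᵀ * M) *ᵥ ⇑(b j) = lam j • ⇑(b j) := hH.mulVec_eigenvectorBasis
  have hnn : ∀ j, 0 ≤ lam j := hpsd.eigenvalues_nonneg
  have hdot : ∀ i j, dotProduct (⇑(b i)) (⇑(b j)) = if i = j then (1:ℝ) else 0 := by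
    intro i j
    have := orthonormal_iff_ite.mp b.orthonormal i j
    rwa [EuclideanSpace.inner_eq_star_dotProduct, star_trivial, dotProduct_comm] at this
  have hMdot : ∀ i j, dotProduct (M *ᵥ ⇑(b i)) (M *ᵥ ⇑(b j))
      = lam i * (if i = j then (1:ℝ) else 0) := by
    intro i j
    rw [dotProduct_mulVec, ← mulVec_transpose, dotProduct_comm, mulVec_mulVec, hmul i,
      dotProduct_smul, smul_eq_mul, hdot j i]
    congr 1
    simp [eq_comm]
  have hle1 : ∀ j, lam j ≤ 1 := by
    intro j
    have h0 := h1.dotProduct_mulVec_nonneg (⇑(b j))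
    rw [star_trivial, sub_mulVec, one_mulVec, dotProduct_sub, hmul j, dotProduct_smul,
      hdot j j, smul_eq_mul, if_pos rfl] at h0
    linarith
  set v : Fin k → EuclideanSpace ℝ (Fin k) :=
    fun i => (Real.sqrt (lam i))⁻¹ • ((WithLp.equiv 2 _).symm (M *ᵥ ⇑(b i))) with hv
  have hin : ∀ i j, ⟪v i, v j⟫ = (Real.sqrt (lam i))⁻¹ * ((Real.sqrt (lam j))⁻¹ *
      (lam i * (if i = j then (1:ℝ) else 0))) := by
    intro i j
    simp only [hv]
    rw [real_inner_smul_left, real_inner_smul_right, WithLp.equiv_symm_apply, EuclideanSpace.inner_toLp_toLp,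
      star_trivial, dotProduct_comm, hMdot i j]
  have hs : Orthonormal ℝ (Set.restrict {i | lam i ≠ 0} v) := by
    rw [orthonormal_iff_ite]
    rintro ⟨i, hi⟩ ⟨j, hj⟩
    simp only [Set.restrict, Set.domRestrict_apply, hin i j, Subtype.mk_eq_mk]
    rcases eq_or_ne i j with rfl | hij
    · have hlpos : 0 < lam i := lt_of_le_of_ne (hnn i) (Ne.symm hi)
      have h2 : Real.sqrt (lam i) * Real.sqrt (lam i) = lam i := Real.mul_self_sqrt (hnn i)
      have h3 : Real.sqrt (lam i) ≠ 0 := by positivity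
      simp only [if_pos rfl, mul_one]
      rw [← h2]
      field_simp
      rw [Real.sqrt_sq (Real.sqrt_nonneg _)]
    · simp [hij]
  obtain ⟨c, hc⟩ := hs.exists_orthonormalBasis_extension_of_card_eq
    (by simp [finrank_euclideanSpace])
  have hkey : ∀ j, M *ᵥ ⇑(b j) = Real.sqrt (lam j) • ⇑(c j) := by
    intro j
    by_cases hj : lam j = 0
    · have h0 : dotProduct (M *ᵥ ⇑(b j)) (M *ᵥ ⇑(b j)) = 0 := by
        rw [hMdot j j, hj, zero_mul]
      rw [dotProduct_self_eq_zero] at h0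
      rw [h0, hj, Real.sqrt_zero, zero_smul]
    · have hcj : c j = v j := hc j hj
      have hlpos : 0 < lam j := lt_of_le_of_ne (hnn j) (Ne.symm hj)
      have hsq : Real.sqrt (lam j) ≠ 0 := by positivity
      rw [hcj]
      simp only [hv]
      funext x
      simp only [WithLp.ofLp_smul, WithLp.equiv_symm_apply, WithLp.ofLp_toLp, Equiv.apply_symm_apply, Pi.smul_apply, smul_eq_mul]
      rw [← mul_assoc, mul_inv_cancel₀ hsq, one_mul]
  set Q : Matrix (Fin k) (Fin k) ℝ := Matrix.of (fun x i => b i x) with hQdef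
  set U : Matrix (Fin k) (Fin k) ℝ := Matrix.of (fun x i => c i x) with hUdef
  set D : Matrix (Fin k) (Fin k) ℝ := Matrix.diagonal (fun i => Real.sqrt (lam i)) with hDdef
  have hDT : Dᵀ = D := by rw [hDdef, Matrix.diagonal_transpose]
  have hQ : Qᵀ * Q = 1 := by
    ext i j
    simpa [hQdef, mul_apply, dotProduct, Matrix.one_apply] using hdot i j
  have hU : Uᵀ * U = 1 := by
    ext i j
    have h := orthonormal_iff_ite.mp c.orthonormal i j
    rw [EuclideanSpace.inner_eq_star_dotProduct, star_trivial, dotProduct_comm] at h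
    simpa [hUdef, mul_apply, dotProduct, Matrix.one_apply] using h
  have hMQ : M * Q = U * D := by
    ext x j
    rw [hDdef, Matrix.mul_diagonal]
    have h := congrFun (hkey j) x
    simp only [Pi.smul_apply, smul_eq_mul] at h
    simp only [hQdef, hUdef, mul_apply, Matrix.of_apply]
    rw [show ∑ y, M x y * (b j) y = (M *ᵥ ⇑(b j)) x from rfl, h, mul_comm]
  have hQQ : Q * Qᵀ = 1 := mul_eq_one_comm.mp hQ
  have hM : M = U * D * Qᵀ := by
    calc M = M * (Q * Qᵀ) := by rw [hQQ, Matrix.mul_one]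
    _ = (M * Q) * Qᵀ := by rw [Matrix.mul_assoc]
    _ = U * D * Qᵀ := by rw [hMQ]
  have hUM : Uᵀ * M = D * Qᵀ := by
    rw [hM]
    simp only [← Matrix.mul_assoc]
    rw [hU, Matrix.one_mul]
  have hMT : Mᵀ = Q * (D * Uᵀ) := by
    rw [hM, Matrix.transpose_mul, Matrix.transpose_mul, Matrix.transpose_transpose, hDT]
  have hDD : D * D = Matrix.diagonal lam := by
    have hfun : (fun i => Real.sqrt (lam i) * Real.sqrt (lam i)) = lam :=
      funext fun i => Real.mul_self_sqrt (hnn i)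
    rw [hDdef, Matrix.diagonal_mul_diagonal, hfun]
  refine ⟨U * Qᵀ, ?_, ?_⟩
  · rw [Matrix.transpose_mul, Matrix.transpose_transpose, Matrix.mul_assoc,
      ← Matrix.mul_assoc Uᵀ, hU, Matrix.one_mul, hQQ]
  · have hR1 : (U * Qᵀ)ᵀ * M = Q * (D * Qᵀ) := by
      rw [Matrix.transpose_mul, Matrix.transpose_transpose, Matrix.mul_assoc, hUM]
    have hR2 : Mᵀ * M = Q * (Matrix.diagonal lam * Qᵀ) := by
      rw [hMT, Matrix.mul_assoc, Matrix.mul_assoc, hUM, ← Matrix.mul_assoc D D Qᵀ, hDD]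
    have htr1 : ((U * Qᵀ)ᵀ * M).trace = ∑ i, Real.sqrt (lam i) := by
      rw [hR1, trace_mul_comm, Matrix.mul_assoc, hQ, Matrix.mul_one, hDdef, trace_diagonal]
    have htr2 : (Mᵀ * M).trace = ∑ i, lam i := by
      rw [hR2, trace_mul_comm, Matrix.mul_assoc, hQ, Matrix.mul_one, trace_diagonal]
    rw [htr1, htr2]
    apply Finset.sum_le_sum
    intro i _
    nlinarith [Real.sq_sqrt (hnn i), Real.sqrt_nonneg (lam i), hle1 i, hnn i]

end Aux

/-- For matrices `V, W` with orthonormal columns and any orthogonal `R`,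
`‖W − VR‖_F ≤ √2·√k·dist(W,V) + ‖VVᵀW − VR‖_F`; for a Procrustes-optimal `R`
one has `‖W − VR‖_F ≤ √2·√k·dist(W,V)`. -/
theorem stmt4 (d k : ℕ) (V W : Matrix (Fin d) (Fin k) ℝ)
    (hV : Vᵀ * V = 1) (hW : Wᵀ * W = 1) :
    (∀ R : Matrix (Fin k) (Fin k) ℝ, Rᵀ * R = 1 →
      frobNorm (W - V * R) ≤
        Real.sqrt 2 * Real.sqrt k * distSub W V + frobNorm (V * Vᵀ * W - V * R)) ∧
    (∀ R : Matrix (Fin k) (Fin k) ℝ, Rᵀ * R = 1 →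
      (∀ R' : Matrix (Fin k) (Fin k) ℝ, R'ᵀ * R' = 1 →
        frobNorm (W - V * R) ≤ frobNorm (W - V * R')) →
      frobNorm (W - V * R) ≤ Real.sqrt 2 * Real.sqrt k * distSub W V) := by
  set M : Matrix (Fin k) (Fin k) ℝ := Vᵀ * W with hM
  set A : Matrix (Fin d) (Fin d) ℝ := V * Vᵀ - W * Wᵀ with hA
  have hdist_nonneg : 0 ≤ distSub W V := norm_nonneg _
  -- W - V*Vᵀ*W = -(A * W)
  have hAW : W - V * Vᵀ * W = -(A * W) := by
    rw [hA, Matrix.sub_mul, Matrix.mul_assoc W Wᵀ W, hW, Matrix.mul_one]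
    rw [neg_sub]
  -- S2 of the residual
  have hS2W : S2 W = (k : ℝ) := by
    rw [S2_eq_trace, hW, Matrix.trace_one]
    simp
  have hres : S2 (W - V * Vᵀ * W) ≤ (k : ℝ) * distSub W V ^ 2 := by
    rw [hAW]
    have : S2 (-(A * W)) = S2 (A * W) := by
      simp [S2, neg_sq]
    rw [this]
    calc S2 (A * W) ≤ opNorm A ^ 2 * S2 W := S2_mul_le A W
    _ = (k : ℝ) * distSub W V ^ 2 := by rw [hS2W, distSub, hA]; ring
  -- S2 (W - V*Vᵀ*W) = k - trace (Mᵀ*M)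
  have htrH : (Wᵀ * (V * Vᵀ * W)).trace = (Mᵀ * M).trace := by
    rw [hM, Matrix.transpose_mul, Matrix.transpose_transpose]
    congr 1
    simp only [Matrix.mul_assoc]
  have hYY : ((V * Vᵀ * W)ᵀ * (V * Vᵀ * W)).trace = (Mᵀ * M).trace := by
    rw [hM]
    congr 1
    simp only [Matrix.transpose_mul, Matrix.transpose_transpose, Matrix.mul_assoc]
    rw [show Vᵀ * (V * (Vᵀ * W)) = (Vᵀ * V) * (Vᵀ * W) by simp only [Matrix.mul_assoc], hV,
      Matrix.one_mul]
  have hWW : (Wᵀ * W).trace = (k : ℝ) := by rw [hW, Matrix.trace_one]; simp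
  have hresEq : S2 (W - V * Vᵀ * W) = (k : ℝ) - (Mᵀ * M).trace := by
    rw [S2_sub, htrH, hYY, hWW]; ring
  have hkH : (k : ℝ) - (Mᵀ * M).trace ≤ (k : ℝ) * distSub W V ^ 2 := by
    rw [← hresEq]; exact hres
  -- S2 (W - V * R') for orthogonal R'
  have hexp : ∀ R' : Matrix (Fin k) (Fin k) ℝ, R'ᵀ * R' = 1 →
      S2 (W - V * R') = 2 * (k : ℝ) - 2 * (R'ᵀ * M).trace := by
    intro R' hR'
    rw [S2_sub, hWW]
    have h1 : ((V * R')ᵀ * (V * R')).trace = (k : ℝ) := by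
      rw [Matrix.transpose_mul, show R'ᵀ * Vᵀ * (V * R') = R'ᵀ * ((Vᵀ * V) * R') by
        simp only [Matrix.mul_assoc], hV, Matrix.one_mul, hR', Matrix.trace_one]
      simp
    have h2 : (Wᵀ * (V * R')).trace = (R'ᵀ * M).trace := by
      rw [← Matrix.trace_transpose (Wᵀ * (V * R')), Matrix.transpose_mul, Matrix.transpose_mul,
        Matrix.transpose_transpose, hM]
      congr 1
      simp only [Matrix.mul_assoc]
    rw [h1, h2]; ring
  -- √2 ≥ 1 helper
  have hsqrt2 : (1 : ℝ) ≤ Real.sqrt 2 := by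
    rw [show (1:ℝ) = Real.sqrt 1 by rw [Real.sqrt_one]]
    exact Real.sqrt_le_sqrt (by norm_num)
  have hfrobres : frobNorm (W - V * Vᵀ * W) ≤ Real.sqrt k * distSub W V := by
    rw [frobNorm_eq_sqrt_S2]
    calc Real.sqrt (S2 (W - V * Vᵀ * W)) ≤ Real.sqrt ((k : ℝ) * distSub W V ^ 2) :=
          Real.sqrt_le_sqrt hres
    _ = Real.sqrt k * distSub W V := by
          rw [Real.sqrt_mul (by positivity), Real.sqrt_sq hdist_nonneg]
  constructor
  · intro R hR
    -- triangle inequality via the Frobenius norm instance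
    have htri : frobNorm (W - V * R) ≤
        frobNorm (W - V * Vᵀ * W) + frobNorm (V * Vᵀ * W - V * R) := by
      letI : NormedAddCommGroup (Matrix (Fin d) (Fin k) ℝ) := Matrix.frobeniusNormedAddCommGroup
      have hfn : ∀ X : Matrix (Fin d) (Fin k) ℝ, frobNorm X = ‖X‖ := by
        intro X
        rw [Matrix.frobenius_norm_def, frobNorm, Real.sqrt_eq_rpow]
        congr 1
        refine Finset.sum_congr rfl fun i _ => Finset.sum_congr rfl fun j _ => ?_
        rw [Real.norm_eq_abs, show ((2:ℝ)) = ((2:ℕ):ℝ) by norm_num, Real.rpow_natCast, sq_abs]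
      rw [hfn, hfn, hfn, show W - V * R = (W - V * Vᵀ * W) + (V * Vᵀ * W - V * R) by abel]
      exact norm_add_le _ _
    refine htri.trans ?_
    apply add_le_add_left
    calc frobNorm (W - V * Vᵀ * W) ≤ Real.sqrt k * distSub W V := hfrobres
    _ ≤ Real.sqrt 2 * Real.sqrt k * distSub W V := by
        nlinarith [Real.sqrt_nonneg (k : ℝ), hdist_nonneg, hsqrt2,
          mul_nonneg (Real.sqrt_nonneg (k:ℝ)) hdist_nonneg]
  · intro R hR hmin
    -- construct the Procrustes rotation via exists_rot
    have hpsd1 : ((1 : Matrix (Fin k) (Fin k) ℝ) - Mᵀ * M).PosSemidef := by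
      have hP : (V * Vᵀ) * (V * Vᵀ) = V * Vᵀ := by
        rw [Matrix.mul_assoc V Vᵀ (V * Vᵀ), ← Matrix.mul_assoc Vᵀ V Vᵀ, hV, Matrix.one_mul]
      have hPP : ((1 : Matrix (Fin d) (Fin d) ℝ) - V * Vᵀ) * (1 - V * Vᵀ)
          = 1 - V * Vᵀ := by
        simp only [Matrix.mul_sub, Matrix.sub_mul, Matrix.one_mul, Matrix.mul_one, hP]
        abel
      have key : ((1 - V * Vᵀ) * W)ᵀ * ((1 - V * Vᵀ) * W) = 1 - Mᵀ * M := by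
        have ht : ((1 - V * Vᵀ) * W)ᵀ = Wᵀ * (1 - V * Vᵀ) := by
          rw [Matrix.transpose_mul, Matrix.transpose_sub, Matrix.transpose_one,
            Matrix.transpose_mul, Matrix.transpose_transpose]
        rw [ht, show Wᵀ * (1 - V * Vᵀ) * ((1 - V * Vᵀ) * W)
            = Wᵀ * (((1 - V * Vᵀ) * (1 - V * Vᵀ)) * W) by simp only [Matrix.mul_assoc], hPP]
        rw [Matrix.sub_mul, Matrix.one_mul, Matrix.mul_sub, hW, hM, Matrix.transpose_mul,
          Matrix.transpose_transpose]
        congr 1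
        simp only [Matrix.mul_assoc]
      rw [← key]
      have := Matrix.posSemidef_conjTranspose_mul_self ((1 - V * Vᵀ) * W)
      rwa [Matrix.conjTranspose_eq_transpose_of_trivial] at this
    obtain ⟨R', hR', htr⟩ := exists_rot M hpsd1
    have hbound : frobNorm (W - V * R') ≤ Real.sqrt 2 * Real.sqrt k * distSub W V := by
      rw [frobNorm_eq_sqrt_S2, hexp R' hR']
      have h1 : 2 * (k : ℝ) - 2 * (R'ᵀ * M).trace ≤ 2 * ((k : ℝ) * distSub W V ^ 2) := by
        nlinarith [hkH, htr]
      calc Real.sqrt (2 * (k : ℝ) - 2 * (R'ᵀ * M).trace)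
          ≤ Real.sqrt (2 * ((k : ℝ) * distSub W V ^ 2)) := Real.sqrt_le_sqrt h1
      _ = Real.sqrt 2 * Real.sqrt k * distSub W V := by
          rw [Real.sqrt_mul (by norm_num), Real.sqrt_mul (by positivity),
            Real.sqrt_sq hdist_nonneg, mul_assoc]
    exact (hmin R' hR').trans hbound
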